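/- Let K be a field of characteristic zero, n, m ≥ 1, λ̃ ∈ K^×, and let p, q ∈ K[x] be monic with deg p = n, deg q = m satisfying m p' q − n p q' = λ̃. Then (p^m/q^n)' = λ̃ p^{m-1}/q^{n+1} in K((x^{-1})), and there exists r ∈ K((x^{-1})) with deg(r) = 1−m−n and leading coefficient λ̃/(1−m−n) such that p^m/q^n = 1 + r. -/

import Mathlib

open Polynomial HahnSeries Finset

noncomputable section

/-- The support of a Laurent series (in `x⁻¹`) is bounded below. -/
theorem LaurentSeries.bddBelow_support {R : Type*} [CommRing R] (f : LaurentSeries R) :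
    BddBelow (Function.support f.coeff) := by
  rcases (Function.support f.coeff).eq_empty_or_nonempty with h | h
  · simp [h]
  · exact ⟨f.isWF_support.min h, fun x hx => f.isWF_support.min_le h hx⟩

/-- Build a Laurent series from a coefficient function with support bounded below. -/
theorem isPWO_of_bddBelow {s : Set ℤ} (h : BddBelow s) : s.IsPWO :=
  Set.IsWF.isPWO h.wellFoundedOn_lt

/-- Formal derivative with respect to `x` on `K[y]((x⁻¹))`, where the Hahn series
variable `t` corresponds to `x⁻¹`, so the coefficient of `x^k` is `f.coeff (-k)`. -/
def lsDx {R : Type*} [CommRing R] (f : LaurentSeries R) : LaurentSeries R where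
  coeff j := (1 - j) • f.coeff (j - 1)
  isPWO_support' := by
    obtain ⟨b, hb⟩ := LaurentSeries.bddBelow_support f
    refine isPWO_of_bddBelow ⟨b + 1, ?_⟩
    intro j hj
    have h1 : f.coeff (j - 1) ≠ 0 := by
      intro h; apply hj; simp [Function.mem_support, h]
    have := hb h1
    omega

/-- Coefficientwise derivative with respect to `y` on `K[y]((x⁻¹))`. -/
def lsDy {K : Type*} [CommRing K] (f : LaurentSeries (Polynomial K)) :
    LaurentSeries (Polynomial K) where
  coeff j := Polynomial.derivative (f.coeff j)
  isPWO_support' := by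
    refine f.isPWO_support.mono ?_
    intro j hj
    simp only [Function.mem_support, HahnSeries.mem_support] at *
    exact fun h => hj (by rw [h]; simp)

/-- The Jacobian `∂ₓP ∂_y F − ∂_y P ∂ₓ F` on `K[y]((x⁻¹))`. -/
def lsJac {K : Type*} [CommRing K] (P F : LaurentSeries (Polynomial K)) :
    LaurentSeries (Polynomial K) :=
  lsDx P * lsDy F - lsDy P * lsDx F

/-- The embedding `K[x] → K((x⁻¹))`, with Hahn series variable `t = x⁻¹`. -/
def embX (K : Type*) [Field K] : Polynomial K →ₐ[K] LaurentSeries K :=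
  Polynomial.aeval (HahnSeries.single (-1 : ℤ) (1 : K))

section Aux

variable {K : Type*} [Field K]

@[simp] lemma lsDx_coeff {R : Type*} [CommRing R] (f : LaurentSeries R) (j : ℤ) :
    (lsDx f).coeff j = (1 - j) • f.coeff (j - 1) := rfl

/-- Euler-type operator `f ↦ ∑ (-j) c_j t^j`, i.e. `x d/dx`. -/
def Eop {R : Type*} [CommRing R] (f : LaurentSeries R) : LaurentSeries R where
  coeff j := (-j) • f.coeff j
  isPWO_support' := f.isPWO_support.mono (fun j hj => by
    simp only [Function.mem_support, ne_eq] at hj ⊢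
    exact fun h => hj (by rw [h, smul_zero]))

@[simp] lemma Eop_coeff {R : Type*} [CommRing R] (f : LaurentSeries R) (j : ℤ) :
    (Eop f).coeff j = (-j) • f.coeff j := rfl

lemma Eop_support {R : Type*} [CommRing R] (f : LaurentSeries R) :
    (Eop f).support ⊆ f.support := fun j hj => by
  simp only [HahnSeries.mem_support, Eop_coeff] at hj ⊢
  exact fun h => hj (by rw [h, smul_zero])

lemma Eop_mul {R : Type*} [CommRing R] (f g : LaurentSeries R) :
    Eop (f * g) = Eop f * g + f * Eop g := by
  ext j
  rw [HahnSeries.coeff_add, Eop_coeff, HahnSeries.coeff_mul,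
    HahnSeries.coeff_mul_left' f.isPWO_support (Eop_support f),
    HahnSeries.coeff_mul_right' g.isPWO_support (Eop_support g),
    Finset.smul_sum, ← Finset.sum_add_distrib]
  refine Finset.sum_congr rfl fun ij hij => ?_
  rw [Finset.mem_addAntidiagonal] at hij
  rw [Eop_coeff, Eop_coeff, ← hij.2.2]
  rw [neg_add, add_smul, smul_mul_assoc, mul_smul_comm]

lemma lsDx_eq_single_mul {R : Type*} [CommRing R] (f : LaurentSeries R) :
    lsDx f = HahnSeries.single (1 : ℤ) (1 : R) * Eop f := by
  ext j
  have h : (HahnSeries.single (1 : ℤ) (1 : R) * Eop f).coeff ((j - 1) + 1) =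
      1 * (Eop f).coeff (j - 1) := HahnSeries.coeff_single_mul_add
  rw [show j - 1 + 1 = j by ring] at h
  rw [h, one_mul, lsDx_coeff, Eop_coeff, show (1 : ℤ) - j = -(j - 1) by ring]

lemma lsDx_mul {R : Type*} [CommRing R] (f g : LaurentSeries R) :
    lsDx (f * g) = lsDx f * g + f * lsDx g := by
  simp only [lsDx_eq_single_mul, Eop_mul]
  ring

lemma lsDx_sub {R : Type*} [CommRing R] (f g : LaurentSeries R) :
    lsDx (f - g) = lsDx f - lsDx g := by
  ext j; simp [lsDx_coeff, HahnSeries.coeff_sub, smul_sub]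

lemma lsDx_one {R : Type*} [CommRing R] : lsDx (1 : LaurentSeries R) = 0 := by
  ext j
  rw [lsDx_coeff]
  by_cases h : j = 1
  · simp [h]
  · rw [HahnSeries.coeff_one, if_neg (by omega), smul_zero, HahnSeries.coeff_zero]

lemma single_neg_one_pow (k : ℕ) :
    (HahnSeries.single (-1 : ℤ) (1 : K)) ^ k = HahnSeries.single (-(k : ℤ)) (1 : K) := by
  rw [HahnSeries.single_pow, one_pow]
  congr 1
  rw [nsmul_eq_mul]; ring

lemma LS.coeff_sum {α : Type*} (s : Finset α) (F : α → LaurentSeries K) (j : ℤ) :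
    (∑ i ∈ s, F i).coeff j = ∑ i ∈ s, (F i).coeff j := by
  classical
  induction s using Finset.induction with
  | empty => simp
  | @insert a s h ih => rw [Finset.sum_insert h, Finset.sum_insert h, HahnSeries.coeff_add, ih]

lemma embX_eq_sum (p : Polynomial K) :
    embX K p = ∑ i ∈ Finset.range (p.natDegree + 1),
      HahnSeries.single (-(i : ℤ)) (p.coeff i) := by
  rw [embX, Polynomial.aeval_eq_sum_range]
  refine Finset.sum_congr rfl fun i _ => ?_
  rw [single_neg_one_pow, Algebra.smul_def, HahnSeries.algebraMap_apply',
    show algebraMap K (PowerSeries K) (p.coeff i) = PowerSeries.C (p.coeff i) from rfl,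
    HahnSeries.ofPowerSeries_C,
    show (HahnSeries.C (p.coeff i) : LaurentSeries K) = HahnSeries.single 0 (p.coeff i) from rfl,
    HahnSeries.single_mul_single, zero_add, mul_one]

lemma embX_coeff_neg (p : Polynomial K) (k : ℕ) :
    (embX K p).coeff (-(k : ℤ)) = p.coeff k := by
  rw [embX_eq_sum, LS.coeff_sum]
  rcases le_or_gt k p.natDegree with h | h
  · rw [Finset.sum_eq_single k (fun i _ hik => HahnSeries.coeff_single_of_ne
      (fun e => hik (by omega))) (fun hk => absurd (Finset.mem_range.2 (by omega)) hk)]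
    exact HahnSeries.coeff_single_same _ _
  · rw [Polynomial.coeff_eq_zero_of_natDegree_lt h]
    exact Finset.sum_eq_zero fun i hi => HahnSeries.coeff_single_of_ne (by
      simp only [Finset.mem_range] at hi
      intro e; omega)

lemma embX_coeff_pos (p : Polynomial K) (j : ℤ) (hj : 0 < j) : (embX K p).coeff j = 0 := by
  rw [embX_eq_sum, LS.coeff_sum]
  exact Finset.sum_eq_zero fun i _ => HahnSeries.coeff_single_of_ne (by intro e; omega)

lemma embX_coeff_of_lt (p : Polynomial K) (j : ℤ) (h : j < -(p.natDegree : ℤ)) :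
    (embX K p).coeff j = 0 := by
  have hj : j = -(((-j).toNat : ℕ) : ℤ) := by omega
  rw [hj, embX_coeff_neg, Polynomial.coeff_eq_zero_of_natDegree_lt (by omega)]

lemma embX_ne_zero {p : Polynomial K} (hp : p ≠ 0) : embX K p ≠ 0 := by
  intro h
  have h2 := embX_coeff_neg p p.natDegree
  rw [h, HahnSeries.coeff_zero] at h2
  exact hp (Polynomial.leadingCoeff_eq_zero.mp h2.symm)

lemma embX_order {p : Polynomial K} (hp : p ≠ 0) :
    (embX K p).order = -(p.natDegree : ℤ) := by
  refine le_antisymm (HahnSeries.order_le_of_coeff_ne_zero ?_) (le_of_not_gt fun h => ?_)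
  · rw [embX_coeff_neg]
    exact Polynomial.leadingCoeff_ne_zero.mpr hp
  · exact embX_ne_zero hp (HahnSeries.coeff_order_eq_zero.mp (embX_coeff_of_lt p _ h))

lemma hahn_leadingCoeff_eq {x : LaurentSeries K} (hx : x ≠ 0) :
    x.leadingCoeff = x.coeff x.order := by
  exact HahnSeries.leadingCoeff_eq

lemma embX_leadingCoeff {p : Polynomial K} (hp : p ≠ 0) :
    (embX K p).leadingCoeff = p.leadingCoeff := by
  rw [hahn_leadingCoeff_eq (embX_ne_zero hp), embX_order hp, embX_coeff_neg,
    Polynomial.coeff_natDegree]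

lemma lsDx_embX (p : Polynomial K) :
    lsDx (embX K p) = embX K (Polynomial.derivative p) := by
  ext j
  rw [lsDx_coeff]
  rcases le_or_gt j 0 with hj | hj
  · obtain ⟨k, rfl⟩ : ∃ k : ℕ, j = -(k : ℤ) := ⟨(-j).toNat, by omega⟩
    rw [show -(k : ℤ) - 1 = -(((k + 1 : ℕ)) : ℤ) by push_cast; ring,
      embX_coeff_neg, embX_coeff_neg, Polynomial.coeff_derivative, zsmul_eq_mul]
    push_cast
    ring
  · rw [embX_coeff_pos _ _ hj]
    by_cases h1 : j = 1
    · rw [h1]; norm_num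
    · rw [embX_coeff_pos _ _ (by omega : (0 : ℤ) < j - 1), smul_zero]

lemma embX_C (c : K) : embX K (Polynomial.C c) = HahnSeries.single (0 : ℤ) c := by
  rw [embX, Polynomial.aeval_C, HahnSeries.algebraMap_apply',
    show algebraMap K (PowerSeries K) c = PowerSeries.C c from rfl,
    HahnSeries.ofPowerSeries_C]
  rfl

lemma div_order_spec (u v : Polynomial K) (hu : u ≠ 0) (hv : v ≠ 0) :
    (embX K u / embX K v).order = (v.natDegree : ℤ) - u.natDegree ∧
    (embX K u / embX K v).coeff ((v.natDegree : ℤ) - u.natDegree)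
      = u.leadingCoeff / v.leadingCoeff := by
  have hue := embX_ne_zero hu
  have hve := embX_ne_zero hv
  have hGne : embX K u / embX K v ≠ 0 := div_ne_zero hue hve
  have hmul : embX K u / embX K v * embX K v = embX K u := div_mul_cancel₀ _ hve
  have ho : (embX K u / embX K v).order + (embX K v).order = (embX K u).order := by
    rw [← HahnSeries.order_mul hGne hve, hmul]
  rw [embX_order hu, embX_order hv] at ho
  have hord : (embX K u / embX K v).order = (v.natDegree : ℤ) - u.natDegree := by omega
  refine ⟨hord, ?_⟩
  have hc := HahnSeries.coeff_mul_order_add_order (embX K u / embX K v) (embX K v)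
  rw [hmul] at hc
  rw [hahn_leadingCoeff_eq hGne, hord, embX_leadingCoeff hv, embX_order hv,
    show (v.natDegree : ℤ) - u.natDegree + -(v.natDegree : ℤ) = -(u.natDegree : ℤ) by ring,
    embX_coeff_neg, Polynomial.coeff_natDegree] at hc
  rw [eq_div_iff (Polynomial.leadingCoeff_ne_zero.mpr hv)]
  exact hc.symm

end Aux

/-- Let `n, m ≥ 1`, `λ̃ ∈ K^×`, and `p, q ∈ K[x]` monic of degrees
`n, m` with `m p' q − n p q' = λ̃`.  Then in `K((x⁻¹))` one has
`(p^m/q^n)' = λ̃ p^{m-1}/q^{n+1}` and `p^m/q^n = 1 + r` for some `r` with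
`deg r = 1−m−n` and leading coefficient `λ̃/(1−m−n)`, i.e. `r.coeff (m+n−1) = λ̃/(1−m−n)`
and `r.coeff j = 0` for `j < m+n−1` (coefficient of `x^k` at Hahn index `-k`). -/
theorem statement14 (K : Type*) [Field K] [CharZero K] (n m : ℕ)
    (hn : 1 ≤ n) (hm : 1 ≤ m) (p q : Polynomial K)
    (hp : p.Monic) (hq : q.Monic) (hpn : p.natDegree = n) (hqm : q.natDegree = m)
    (lamt : K) (hlamt : lamt ≠ 0)
    (heq : (m : Polynomial K) * p.derivative * q - (n : Polynomial K) * p * q.derivative =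
      Polynomial.C lamt) :
    lsDx (embX K p ^ m / embX K q ^ n) =
      HahnSeries.single 0 lamt * embX K p ^ (m - 1) / embX K q ^ (n + 1) ∧
    ∃ r : LaurentSeries K,
      embX K p ^ m / embX K q ^ n = 1 + r ∧
      r.coeff ((m : ℤ) + n - 1) = lamt / (1 - (m : K) - (n : K)) ∧
      r.coeff ((m : ℤ) + n - 1) ≠ 0 ∧
      ∀ j : ℤ, j < (m : ℤ) + n - 1 → r.coeff j = 0 := by
  obtain ⟨m', rfl⟩ : ∃ m', m = m' + 1 := ⟨m - 1, by omega⟩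
  obtain ⟨n', rfl⟩ : ∃ n', n = n' + 1 := ⟨n - 1, by omega⟩
  have hp0 : p ≠ 0 := hp.ne_zero
  have hq0 : q ≠ 0 := hq.ne_zero
  set a : LaurentSeries K := embX K p with ha_def
  set b : LaurentSeries K := embX K q with hb_def
  have ha : a ≠ 0 := embX_ne_zero hp0
  have hb : b ≠ 0 := embX_ne_zero hq0
  have hbn : b ^ (n' + 1) ≠ 0 := pow_ne_zero _ hb
  set F : LaurentSeries K := a ^ (m' + 1) / b ^ (n' + 1) with hF_def
  have hF : F * b ^ (n' + 1) = a ^ (m' + 1) := div_mul_cancel₀ _ hbn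
  set da : LaurentSeries K := embX K (Polynomial.derivative p) with hda_def
  set db : LaurentSeries K := embX K (Polynomial.derivative q) with hdb_def
  have hdxa : lsDx (a ^ (m' + 1)) = ((m' + 1 : ℕ) : LaurentSeries K) * a ^ m' * da := by
    rw [ha_def, ← map_pow, lsDx_embX, Polynomial.derivative_pow]
    simp only [Nat.add_sub_cancel, map_mul, map_pow, Polynomial.C_eq_natCast, map_natCast]
    rfl
  have hdxb : lsDx (b ^ (n' + 1)) = ((n' + 1 : ℕ) : LaurentSeries K) * b ^ n' * db := by
    rw [hb_def, ← map_pow, lsDx_embX, Polynomial.derivative_pow]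
    simp only [Nat.add_sub_cancel, map_mul, map_pow, Polynomial.C_eq_natCast, map_natCast]
    rfl
  have he : ((m' + 1 : ℕ) : LaurentSeries K) * da * b
      - ((n' + 1 : ℕ) : LaurentSeries K) * a * db = HahnSeries.single (0 : ℤ) lamt := by
    have h := congrArg (embX K) heq
    simpa only [map_sub, map_mul, map_natCast, embX_C] using h
  have key : lsDx F * b ^ (n' + 1) + F * lsDx (b ^ (n' + 1)) = lsDx (a ^ (m' + 1)) := by
    rw [← lsDx_mul, hF]
  rw [hdxa, hdxb] at key
  have part1 : lsDx F = HahnSeries.single (0 : ℤ) lamt * a ^ m' / b ^ (n' + 1 + 1) := by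
    rw [eq_div_iff (pow_ne_zero _ hb)]
    have hkey2 : lsDx F * b ^ (n' + 1) =
        ((m' + 1 : ℕ) : LaurentSeries K) * a ^ m' * da
          - F * (((n' + 1 : ℕ) : LaurentSeries K) * b ^ n' * db) := eq_sub_of_add_eq key
    calc lsDx F * b ^ (n' + 1 + 1) = lsDx F * b ^ (n' + 1) * b := by ring
      _ = (((m' + 1 : ℕ) : LaurentSeries K) * a ^ m' * da
            - F * (((n' + 1 : ℕ) : LaurentSeries K) * b ^ n' * db)) * b := by rw [hkey2]
      _ = HahnSeries.single (0 : ℤ) lamt * a ^ m' := by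
          linear_combination a ^ m' * he - ((n' + 1 : ℕ) : LaurentSeries K) * db * hF
  constructor
  · simpa only [Nat.add_sub_cancel] using part1
  · -- facts about F = 1 + (lower order terms)
    have hFfacts := div_order_spec (p ^ (m' + 1)) (q ^ (n' + 1))
      (pow_ne_zero _ hp0) (pow_ne_zero _ hq0)
    rw [map_pow, map_pow, ← ha_def, ← hb_def, ← hF_def, Polynomial.natDegree_pow,
      Polynomial.natDegree_pow, hpn, hqm, (hp.pow _).leadingCoeff, (hq.pow _).leadingCoeff] at hFfacts
    have hFord : F.order = 0 := by
      rw [hFfacts.1, show (((n' + 1) * (m' + 1) : ℕ) : ℤ) - (((m' + 1) * (n' + 1) : ℕ) : ℤ) = 0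
        by push_cast; ring]
    have hFcoeff0 : F.coeff 0 = 1 := by
      have h := hFfacts.2
      rw [show (((n' + 1) * (m' + 1) : ℕ) : ℤ) - (((m' + 1) * (n' + 1) : ℕ) : ℤ) = 0
        by push_cast; ring, div_one] at h
      exact h
    -- facts about H := lsDx F
    have hHfacts := div_order_spec (Polynomial.C lamt * p ^ m') (q ^ (n' + 1 + 1))
      (mul_ne_zero (by simpa using hlamt) (pow_ne_zero _ hp0)) (pow_ne_zero _ hq0)
    rw [map_mul, map_pow, map_pow, embX_C, ← ha_def, ← hb_def,
      Polynomial.natDegree_C_mul hlamt, Polynomial.natDegree_pow, Polynomial.natDegree_pow,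
      hpn, hqm, Polynomial.leadingCoeff_mul, Polynomial.leadingCoeff_C,
      Polynomial.leadingCoeff_pow, hp.leadingCoeff, (hq.pow _).leadingCoeff] at hHfacts
    have hIdx : (((n' + 1 + 1) * (m' + 1) : ℕ) : ℤ) - ((m' * (n' + 1) : ℕ) : ℤ)
        = (m' : ℤ) + n' + 2 := by push_cast; ring
    rw [hIdx] at hHfacts
    have hDr : lsDx (F - 1) = HahnSeries.single (0 : ℤ) lamt * a ^ m' / b ^ (n' + 1 + 1) := by
      rw [lsDx_sub, lsDx_one, sub_zero, part1]
    have hHord : (HahnSeries.single (0 : ℤ) lamt * a ^ m' / b ^ (n' + 1 + 1)).order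
        = (m' : ℤ) + n' + 2 := hHfacts.1
    have hHcoeff : (HahnSeries.single (0 : ℤ) lamt * a ^ m' / b ^ (n' + 1 + 1)).coeff
        ((m' : ℤ) + n' + 2) = lamt := by
      rw [hHfacts.2, one_pow, mul_one, div_one]
    refine ⟨F - 1, by ring, ?_, ?_, ?_⟩
    · -- leading coefficient of r
      have h1 : (lsDx (F - 1)).coeff ((m' : ℤ) + n' + 2) = lamt := by rw [hDr]; exact hHcoeff
      rw [lsDx_coeff] at h1
      rw [show ((m' : ℤ) + n' + 2) - 1 = ((m' + 1 : ℕ) : ℤ) + ((n' + 1 : ℕ) : ℤ) - 1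
        by push_cast; ring] at h1
      rw [show (1 : ℤ) - ((m' : ℤ) + n' + 2) = -((m' : ℤ) + n' + 1) by ring] at h1
      rw [zsmul_eq_mul] at h1
      have hden : ((1 : K) - ((m' + 1 : ℕ) : K) - ((n' + 1 : ℕ) : K))
          = ((-((m' : ℤ) + n' + 1) : ℤ) : K) := by push_cast; ring
      have hdnz : ((-((m' : ℤ) + n' + 1) : ℤ) : K) ≠ 0 := by
        rw [Int.cast_ne_zero]; omega
      rw [eq_div_iff (hden ▸ hdnz)]
      rw [hden, mul_comm]
      exact h1
    · -- nonvanishing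
      have h1 : (lsDx (F - 1)).coeff ((m' : ℤ) + n' + 2) = lamt := by rw [hDr]; exact hHcoeff
      rw [lsDx_coeff] at h1
      rw [show ((m' : ℤ) + n' + 2) - 1 = ((m' + 1 : ℕ) : ℤ) + ((n' + 1 : ℕ) : ℤ) - 1
        by push_cast; ring] at h1
      intro hzero
      rw [hzero, smul_zero] at h1
      exact hlamt h1.symm
    · -- vanishing below the top degree
      intro j hj
      have hj' : j < (m' : ℤ) + n' + 1 := by push_cast at hj ⊢; omega
      rcases lt_trichotomy j 0 with h | h | h
      · rw [HahnSeries.coeff_sub, HahnSeries.coeff_one, if_neg (by omega), sub_zero]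
        exact HahnSeries.coeff_eq_zero_of_lt_order (by rw [hFord]; exact h)
      · rw [h, HahnSeries.coeff_sub, HahnSeries.coeff_one, if_pos rfl, hFcoeff0, sub_self]
      · have h1 : (lsDx (F - 1)).coeff (j + 1) = 0 := by
          rw [hDr]
          exact HahnSeries.coeff_eq_zero_of_lt_order (by rw [hHord]; omega)
        rw [lsDx_coeff, show j + 1 - 1 = j by ring, zsmul_eq_mul] at h1
        rcases mul_eq_zero.mp h1 with h3 | h3
        · exfalso
          rw [Int.cast_eq_zero] at h3
          omega
        · exact h3

end
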